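/- arXiv:1501.07137 — 2 statements merged into one kernel-verified Lean document; each statement's English description precedes it below -/
import Mathlib

section
/- For all positive integers p, r and every positive integer n, the Raney number satisfies the ordered-partition expansion: (r/(n·p+r))·C(n·p+r, n) = Σ_λ C(r, λ₁)·C(p·λ₁, λ₂)·C(p·λ₂, λ₃)···C(p·λ_{j-1}, λ_j), where the sum ranges over all ordered partitions (compositions) λ = (λ₁, λ₂, …, λ_j) of n into positive parts, of any length j ≥ 1, and C(a,b) denotes the binomial coefficient. (The equality may be read in the rational numbers.) -/
/-- The product `C(prev, λ₁) · C(p·λ₁, λ₂) · ⋯ · C(p·λ_{j-1}, λ_j)` along a list of parts,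
where the first binomial's top is `prev` and each subsequent top is `p` times the
previous part. -/
def raneyChainProd (p : ℕ) : ℕ → List ℕ → ℕ
  | _, [] => 1
  | prev, a :: t => prev.choose a * raneyChainProd p (p * a) t

/-- A composition of `0` has empty blocks. -/
lemma comp_zero_blocks (c : Composition 0) : c.blocks = [] := by
  have h := c.blocks_sum
  have hp := @c.blocks_pos
  rcases hc : c.blocks with _ | ⟨a, t⟩
  · rfl
  · exfalso
    have ha : 0 < a := hp (hc ▸ List.mem_cons_self)
    rw [hc] at h
    simp [List.sum_cons] at h
    omega

instance : Unique (Composition 0) where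
  default := ⟨[], by simp, by simp⟩
  uniq c := by ext1; simp [comp_zero_blocks]

lemma comp_succ_cons {n : ℕ} (c : Composition (n + 1)) :
    c.blocks = c.blocks.headI :: c.blocks.tail ∧ 0 < c.blocks.headI ∧
      c.blocks.headI + c.blocks.tail.sum = n + 1 := by
  have h := c.blocks_sum
  have hp := @c.blocks_pos
  rcases hc : c.blocks with _ | ⟨a, t⟩
  · rw [hc] at h; simp at h
  · rw [hc] at h
    have ha : 0 < a := hp (hc ▸ List.mem_cons_self)
    simp [List.sum_cons] at h
    simp [List.headI, List.tail]
    omega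

/-- Splitting a composition of `n+1` by its first block. -/
def compSplit (n : ℕ) : Composition (n + 1) ≃ Σ a : Fin (n + 1), Composition (n - a) where
  toFun c :=
    ⟨⟨c.blocks.headI - 1, by have := comp_succ_cons c; omega⟩,
     ⟨c.blocks.tail, fun {i} hi => c.blocks_pos (List.mem_of_mem_tail hi),
      show c.blocks.tail.sum = n - (c.blocks.headI - 1) from
        by have := comp_succ_cons c; omega⟩⟩
  invFun := fun ⟨a, c⟩ =>
    ⟨(a.1 + 1) :: c.blocks,
     by
      intro i hi
      rcases List.mem_cons.1 hi with h | h
      · omega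
      · exact c.blocks_pos h,
     by
      have := c.blocks_sum
      have := a.2
      simp [List.sum_cons, this]
      omega⟩
  left_inv c := by
    obtain ⟨hcons, hpos, hsum⟩ := comp_succ_cons c
    ext1
    simp only
    conv_rhs => rw [hcons]
    congr 1
    omega
  right_inv := fun ⟨a, c⟩ => by
    have h1 : (((a.1 + 1) :: c.blocks).headI - 1 : ℕ) = a.1 := by simp
    refine Sigma.ext (Fin.ext (by simp)) ?_
    apply heq_of_eq_of_heq (b := (⟨c.blocks, fun {i} hi => c.blocks_pos hi, c.blocks_sum⟩ :
        Composition (n - a.1)))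
    · rfl
    · congr 1 <;> simp

lemma raneyArith (p r m : ℕ) (hp : 0 < p) (hr : 0 < r) :
    (r : ℚ) / ((m+1) * p + r) * (((m+1) * p + r).choose (m+1)) =
      ∑ a : Fin (m+1), (r.choose (a.1 + 1) : ℚ) * ((p * (a.1 + 1) : ℕ) : ℚ) /
            (((m - a.1) : ℕ) * p + (p * (a.1 + 1) : ℕ)) *
            (((m - a.1) * p + p * (a.1 + 1)).choose (m - a.1)) := by
  have hm1 : ((m : ℚ) + 1) ≠ 0 := by positivity
  have hpq : (p : ℚ) ≠ 0 := by positivity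
  have hterm : ∀ a : Fin (m+1),
      (r.choose (a.1 + 1) : ℚ) * ((p * (a.1 + 1) : ℕ) : ℚ) /
            (((m - a.1) : ℕ) * p + (p * (a.1 + 1) : ℕ)) *
            (((m - a.1) * p + p * (a.1 + 1)).choose (m - a.1))
      = (r : ℚ) / (m + 1) * (((r-1).choose a.1 : ℚ) * ((p * (m+1)).choose (m - a.1))) := by
    intro a
    have hnat : (m - a.1) * p + p * (a.1 + 1) = p * (m + 1) := by
      have h1 : m - a.1 + a.1 = m := by have := a.2; omega
      calc (m - a.1) * p + p * (a.1 + 1) = p * ((m - a.1) + a.1 + 1) := by ring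
        _ = p * (m + 1) := by rw [h1]
    rw [hnat]
    have hden : (((m - a.1) : ℕ) : ℚ) * p + ((p * (a.1 + 1) : ℕ) : ℚ)
        = (p : ℚ) * ((m : ℚ) + 1) := by
      have := congrArg (Nat.cast (R := ℚ)) hnat
      push_cast at this
      rw [← this]; push_cast; ring
    rw [hden]
    have h2 : r * (r-1).choose a.1 = r.choose (a.1+1) * (a.1+1) := by
      have h3 := Nat.add_one_mul_choose_eq (r-1) a.1
      have hr1 : r - 1 + 1 = r := by omega
      simpa [Nat.succ_eq_add_one, hr1] using h3
    have h2q := congrArg (Nat.cast (R := ℚ)) h2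
    push_cast at h2q
    push_cast
    field_simp
    linear_combination (-(((p * (m+1)).choose (m - a.1) : ℕ) : ℚ)) * h2q
  rw [Finset.sum_congr rfl fun a _ => hterm a]
  rw [← Finset.mul_sum]
  have hV : ∑ a : Fin (m+1), (((r-1).choose a.1 : ℚ) * ((p * (m+1)).choose (m - a.1)))
      = ((((r-1) + p*(m+1)).choose m : ℚ)) := by
    rw [Nat.add_choose_eq, Finset.Nat.sum_antidiagonal_eq_sum_range_succ_mk]
    push_cast
    rw [Fin.sum_univ_eq_sum_range (fun a => ((r-1).choose a : ℚ) * ((p * (m+1)).choose (m - a)))]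
  rw [hV]
  have hNpos : 0 < (m+1) * p + r := by positivity
  have hN1 : (m+1) * p + r - 1 = (r-1) + p*(m+1) := by
    rw [mul_comm (m+1) p]
    generalize p * (m+1) = q
    omega
  have hkey : ((m+1) * p + r) * ((r-1) + p*(m+1)).choose m
      = ((m+1) * p + r).choose (m+1) * (m+1) := by
    have h3 := Nat.add_one_mul_choose_eq ((m+1) * p + r - 1) m
    rw [Nat.sub_add_cancel hNpos, hN1] at h3
    exact h3
  have hkq := congrArg (Nat.cast (R := ℚ)) hkey
  push_cast at hkq
  have hNq : ((m:ℚ)+1) * p + r ≠ 0 := by positivity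
  field_simp
  linear_combination (-1 : ℚ) * hkq

lemma key (p : ℕ) (hp : 0 < p) : ∀ n : ℕ, ∀ r : ℕ, 0 < r →
    (r : ℚ) / (n * p + r) * ((n * p + r).choose n) =
      ∑ c : Composition n, (raneyChainProd p r c.blocks : ℚ) := by
  intro n
  induction n using Nat.strong_induction_on with
  | _ n IH =>
    intro r hr
    rcases n with _ | m
    · rw [Fintype.sum_unique]
      have : (default : Composition 0).blocks = [] := comp_zero_blocks _
      rw [comp_zero_blocks]
      have hr' : (r : ℚ) ≠ 0 := by positivity
      simp [raneyChainProd, hr']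
    · -- n = m + 1
      rw [Equiv.sum_comp (compSplit m).symm
        (fun c => (raneyChainProd p r c.blocks : ℚ)) |>.symm]
      rw [← Finset.univ_sigma_univ, Finset.sum_sigma]
      have step : ∀ a : Fin (m + 1), ∀ c : Composition (m - a),
          ((compSplit m).symm ⟨a, c⟩).blocks = (a.1 + 1) :: c.blocks := fun a c => rfl
      simp only [step]
      have hterm : ∀ a : Fin (m + 1),
          ∑ c : Composition (m - a.1), (raneyChainProd p r ((a.1 + 1) :: c.blocks) : ℚ) =
          (r.choose (a.1 + 1) : ℚ) * ((p * (a.1 + 1) : ℕ) : ℚ) /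
            (((m - a.1) : ℕ) * p + (p * (a.1 + 1) : ℕ)) *
            (((m - a.1) * p + p * (a.1 + 1)).choose (m - a.1)) := by
        intro a
        have hpa : 0 < p * (a.1 + 1) := by positivity
        have := IH (m - a.1) (by omega) (p * (a.1 + 1)) hpa
        calc ∑ c : Composition (m - a.1), (raneyChainProd p r ((a.1 + 1) :: c.blocks) : ℚ)
            = (r.choose (a.1 + 1) : ℚ) *
              ∑ c : Composition (m - a.1), (raneyChainProd p (p * (a.1 + 1)) c.blocks : ℚ) := by
              rw [Finset.mul_sum]
              refine Finset.sum_congr rfl fun c _ => ?_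
              simp [raneyChainProd, mul_comm]
          _ = _ := by rw [← this]; ring
      rw [Finset.sum_congr rfl fun a _ => hterm a]
      -- now a pure arithmetic identity
      have harith := raneyArith p r m hp hr
      push_cast at harith ⊢
      exact harith

/-- Ordered-partition (composition) expansion of the Raney numbers:
`R_{p,r}(n) = (r/(np+r))·C(np+r, n) = Σ_λ C(r, λ₁)·C(p·λ₁, λ₂)···C(p·λ_{j-1}, λ_j)`,
the sum ranging over all compositions `λ` of `n`. -/
theorem raney_eq_sum_over_compositions (p r n : ℕ) (hp : 0 < p) (hr : 0 < r) (hn : 0 < n) :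
    (r : ℚ) / (n * p + r) * ((n * p + r).choose n) =
      ∑ c : Composition n, (raneyChainProd p r c.blocks : ℚ) :=
  key p hp n r hr
end

section
/- Let p, r be positive integers and let the p-Catalan numbers be defined by ₚc₀ = 1 and ₚc_k = (1/k)·C(p·k, k−1) for k ≥ 1. Then for every n ≥ 0, the Raney number satisfies (r/(n·p+r))·C(n·p+r, n) = Σ ₚc_{i₁}·ₚc_{i₂}···ₚc_{i_r}, where the sum ranges over all r-tuples (i₁, …, i_r) of nonnegative integers with i₁ + ⋯ + i_r = n. (The equality may be read in the rational numbers.) -/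
/-- The `p`-Catalan numbers: `ₚc₀ = 1` and `ₚc_k = (1/k)·C(p·k, k-1)` for `k ≥ 1`. -/
def pCatalan (p : ℕ) : ℕ → ℚ
  | 0 => 1
  | k + 1 => (1 / (k + 1 : ℚ)) * ((p * (k + 1)).choose k)

/-- Subtraction-free form of the Raney numbers `R_{p,x}(n)`. -/
def gRaney (p x : ℕ) : ℕ → ℚ
  | 0 => 1
  | n + 1 => (((x + (n + 1) * p).choose (n + 1) : ℕ) : ℚ)
      - (p : ℚ) * (((x + n * p + (p - 1)).choose n : ℕ) : ℚ)

lemma cast_succ_mul_choose (m n : ℕ) :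
    ((m : ℚ) + 1) * (m.choose n) = ((m + 1).choose (n + 1) : ℕ) * ((n : ℚ) + 1) := by
  exact_mod_cast congrArg (Nat.cast : ℕ → ℚ) (Nat.add_one_mul_choose_eq m n)

lemma gRaney_zero_left (p : ℕ) (hp : 0 < p) (n : ℕ) : gRaney p 0 (n + 1) = 0 := by
  simp only [gRaney]
  have h0 : 0 + n * p + (p - 1) = n * p + (p - 1) := by omega
  have h1 : 0 + (n + 1) * p = (n * p + (p - 1)) + 1 := by
    simp only [add_mul, one_mul]; omega
  rw [h0, h1]
  set m := n * p + (p - 1) with hm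
  have key := cast_succ_mul_choose m n
  have hmp : ((m : ℚ) + 1) = ((n : ℚ) + 1) * p := by
    have h : m + 1 = (n + 1) * p := by
      rw [hm]; simp only [add_mul, one_mul]; omega
    exact_mod_cast h
  rw [hmp] at key
  have hn : ((n : ℚ) + 1) ≠ 0 := by positivity
  apply mul_left_cancel₀ hn
  linear_combination -key

lemma gRaney_one (p : ℕ) (hp : 0 < p) (n : ℕ) : gRaney p 1 n = pCatalan p n := by
  cases n with
  | zero => rfl
  | succ n =>
    simp only [gRaney, pCatalan]
    have h0 : 1 + n * p + (p - 1) = p * (n + 1) := by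
      rw [mul_add, mul_one, mul_comm]; omega
    have h1 : 1 + (n + 1) * p = p * (n + 1) + 1 := by
      rw [add_mul, one_mul, mul_add, mul_one, mul_comm]; omega
    rw [h0, h1]
    set m := p * (n + 1) with hm
    have key := cast_succ_mul_choose m n
    have hmp : ((m : ℚ) + 1) = (p : ℚ) * ((n : ℚ) + 1) + 1 := by
      have h : (m : ℚ) = (p : ℚ) * ((n : ℚ) + 1) := by rw [hm]; push_cast; ring
      rw [h]
    rw [hmp] at key
    have hn : ((n : ℚ) + 1) ≠ 0 := by positivity
    rw [one_div, inv_mul_eq_div, eq_div_iff hn]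
    linear_combination -key

lemma gRaney_eq (p x : ℕ) (hp : 0 < p) (hx : 0 < x) (n : ℕ) :
    (x : ℚ) / (n * p + x) * ((n * p + x).choose n) = gRaney p x n := by
  cases n with
  | zero =>
    have hx0 : (x : ℚ) ≠ 0 := by positivity
    simp [gRaney, hx0]
  | succ n =>
    simp only [gRaney]
    have h1 : x + (n + 1) * p = (x + n * p + (p - 1)) + 1 := by
      simp only [add_mul, one_mul]; omega
    have h2 : (n + 1) * p + x = (x + n * p + (p - 1)) + 1 := by
      simp only [add_mul, one_mul]; omega
    rw [h1, h2]
    set m := x + n * p + (p - 1) with hm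
    have key := cast_succ_mul_choose m n
    have hmp : ((m : ℚ) + 1) = ((n : ℚ) + 1) * p + x := by
      have h : m + 1 = (n + 1) * p + x := h2.symm ▸ rfl
      exact_mod_cast h
    have hden : ((n + 1 : ℕ) : ℚ) * p + x = (m : ℚ) + 1 := by push_cast; linarith [hmp]
    rw [hden]
    have hm1 : ((m : ℚ) + 1) ≠ 0 := by positivity
    rw [div_mul_eq_mul_div, div_eq_iff hm1]
    linear_combination (p : ℚ) * key - (((m + 1).choose (n + 1) : ℕ) : ℚ) * hmp

lemma gRaney_rec (p : ℕ) (hp : 0 < p) (x n : ℕ) :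
    gRaney p (x + 1) (n + 1) = gRaney p x (n + 1) + gRaney p (x + p) n := by
  cases n with
  | zero =>
    simp only [gRaney]
    norm_num [Nat.choose_one_right]
  | succ k =>
    simp only [gRaney]
    have e1 : x + 1 + (k + 1 + 1) * p = (x + (k + 1) * p + (p - 1)) + 2 := by
      simp only [add_mul, one_mul]; omega
    have e2 : x + 1 + (k + 1) * p + (p - 1) = (x + (k + 1) * p + (p - 1)) + 1 := by omega
    have e3 : x + (k + 1 + 1) * p = (x + (k + 1) * p + (p - 1)) + 1 := by
      simp only [add_mul, one_mul]; omega
    have e4 : x + p + (k + 1) * p = (x + (k + 1) * p + (p - 1)) + 1 := by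
      simp only [add_mul, one_mul]; omega
    have e5 : x + p + k * p + (p - 1) = x + (k + 1) * p + (p - 1) := by
      simp only [add_mul, one_mul]; omega
    rw [e1, e2, e3, e4, e5]
    set m := x + (k + 1) * p + (p - 1) with hm
    have p1 : (m + 2).choose (k + 2) = (m + 1).choose (k + 1) + (m + 1).choose (k + 2) :=
      Nat.choose_succ_succ (m + 1) (k + 1)
    have p2 : (m + 1).choose (k + 1) = m.choose k + m.choose (k + 1) :=
      Nat.choose_succ_succ m k
    have p1' : (((m + 2).choose (k + 2) : ℕ) : ℚ)
        = ((m + 1).choose (k + 1) : ℕ) + (((m + 1).choose (k + 2) : ℕ) : ℚ) := by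
      exact_mod_cast congrArg (Nat.cast : ℕ → ℚ) p1
    have p2' : (((m + 1).choose (k + 1) : ℕ) : ℚ)
        = (m.choose k : ℕ) + ((m.choose (k + 1) : ℕ) : ℚ) := by
      exact_mod_cast congrArg (Nat.cast : ℕ → ℚ) p2
    linear_combination p1' - (p : ℚ) * p2'

/-- The convolution lemma: `Σ_{k≤n} c_k · g(x, n-k) = g(x+1, n)`. -/
lemma gRaney_conv (p : ℕ) (hp : 0 < p) :
    ∀ n x, ∑ k ∈ Finset.range (n + 1), pCatalan p k * gRaney p x (n - k)
      = gRaney p (x + 1) n := by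
  intro n
  induction n with
  | zero => intro x; simp [gRaney, pCatalan]
  | succ n ih =>
    intro x
    induction x with
    | zero =>
      rw [Finset.sum_range_succ]
      have hz : ∀ k ∈ Finset.range (n + 1), pCatalan p k * gRaney p 0 (n + 1 - k) = 0 := by
        intro k hk
        rw [Finset.mem_range] at hk
        have h : n + 1 - k = (n - k) + 1 := by omega
        rw [h, gRaney_zero_left p hp, mul_zero]
      rw [Finset.sum_eq_zero hz, zero_add]
      have h : n + 1 - (n + 1) = 0 := by omega
      rw [h]
      show pCatalan p (n + 1) * 1 = gRaney p 1 (n + 1)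
      rw [gRaney_one p hp, mul_one]
    | succ x ihx =>
      have split : ∀ k ∈ Finset.range (n + 2),
          pCatalan p k * gRaney p (x + 1) (n + 1 - k)
            = pCatalan p k * gRaney p x (n + 1 - k)
              + (if k ≤ n then pCatalan p k * gRaney p (x + p) (n - k) else 0) := by
        intro k hk
        rw [Finset.mem_range] at hk
        by_cases h : k ≤ n
        · have e : n + 1 - k = (n - k) + 1 := by omega
          rw [if_pos h, e, gRaney_rec p hp]
          ring
        · have e : n + 1 - k = 0 := by omega
          rw [if_neg h, e]
          show pCatalan p k * 1 = pCatalan p k * 1 + 0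
          ring
      rw [Finset.sum_congr rfl split, Finset.sum_add_distrib, ihx]
      have hsum : ∑ k ∈ Finset.range (n + 2),
          (if k ≤ n then pCatalan p k * gRaney p (x + p) (n - k) else 0)
          = ∑ k ∈ Finset.range (n + 1), pCatalan p k * gRaney p (x + p) (n - k) := by
        rw [Finset.sum_range_succ, if_neg (by omega), add_zero]
        refine Finset.sum_congr rfl fun k hk => ?_
        rw [Finset.mem_range] at hk
        rw [if_pos (by omega)]
      rw [hsum, ih (x + p)]
      have e : x + p + 1 = x + 1 + p := by omega
      rw [e, ← gRaney_rec p hp]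

/-- Decomposing a sum over `antidiagonalTuple (r+1) n`. -/
lemma sum_antidiagonalTuple_succ {M : Type*} [AddCommMonoid M] (r n : ℕ)
    (F : (Fin (r + 1) → ℕ) → M) :
    ∑ f ∈ Finset.Nat.antidiagonalTuple (r + 1) n, F f
      = ∑ ab ∈ Finset.HasAntidiagonal.antidiagonal n,
          ∑ g ∈ Finset.Nat.antidiagonalTuple r ab.2, F (Fin.cons ab.1 g) := by
  rw [Finset.sum_sigma']
  refine Finset.sum_nbij'
    (i := fun f => ⟨(f 0, ∑ i, Fin.tail f i), Fin.tail f⟩)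
    (j := fun x => Fin.cons x.1.1 x.2) ?_ ?_ ?_ ?_ ?_
  · intro f hf
    rw [Finset.Nat.mem_antidiagonalTuple] at hf
    refine Finset.mem_sigma.mpr ⟨?_, ?_⟩
    · rw [Finset.HasAntidiagonal.mem_antidiagonal]
      rw [← hf, Fin.sum_univ_succ]
      rfl
    · exact Finset.Nat.mem_antidiagonalTuple.mpr rfl
  · intro x hx
    rw [Finset.mem_sigma] at hx
    obtain ⟨h1, h2⟩ := hx
    rw [Finset.HasAntidiagonal.mem_antidiagonal] at h1
    rw [Finset.Nat.mem_antidiagonalTuple] at h2 ⊢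
    rw [Fin.sum_univ_succ]
    simp [Fin.cons_zero, Fin.cons_succ, h2, h1]
  · intro f _
    exact Fin.cons_self_tail f
  · intro x hx
    rw [Finset.mem_sigma] at hx
    obtain ⟨h1, h2⟩ := hx
    rw [Finset.HasAntidiagonal.mem_antidiagonal] at h1
    rw [Finset.Nat.mem_antidiagonalTuple] at h2
    refine Sigma.ext ?_ ?_
    · simp only [Fin.cons_zero]
      have h : ∑ i, Fin.tail (Fin.cons x.1.1 x.2 : Fin (r + 1) → ℕ) i = x.1.2 := by
        rw [Fin.tail_cons]; exact h2
      rw [h]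
    · simp [Fin.tail_cons]
  · intro f _
    rw [Fin.cons_self_tail]

lemma sum_prod_pCatalan (p : ℕ) (hp : 0 < p) :
    ∀ r n, ∑ f ∈ Finset.Nat.antidiagonalTuple r n, ∏ i, pCatalan p (f i) = gRaney p r n := by
  intro r
  induction r with
  | zero =>
    intro n
    cases n with
    | zero => simp [gRaney]
    | succ n =>
      rw [Finset.Nat.antidiagonalTuple_zero_succ, gRaney_zero_left p hp]
      simp
  | succ r ih =>
    intro n
    rw [sum_antidiagonalTuple_succ]
    have h : ∀ ab ∈ Finset.HasAntidiagonal.antidiagonal n,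
        (∑ g ∈ Finset.Nat.antidiagonalTuple r ab.2,
            ∏ i, pCatalan p ((Fin.cons ab.1 g : Fin (r + 1) → ℕ) i))
          = pCatalan p ab.1 * gRaney p r ab.2 := by
      intro ab _
      rw [← ih ab.2, Finset.mul_sum]
      refine Finset.sum_congr rfl fun g _ => ?_
      rw [Fin.prod_univ_succ]
      simp [Fin.cons_zero, Fin.cons_succ]
    rw [Finset.sum_congr rfl h, Finset.Nat.sum_antidiagonal_eq_sum_range_succ_mk]
    exact gRaney_conv p hp n r

/-- Hilton–Pedersen decomposition of the Raney numbers: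
`R_{p,r}(n) = (r/(np+r))·C(np+r, n) = Σ_{i₁+⋯+i_r = n} ₚc_{i₁}···ₚc_{i_r}`. -/
theorem raney_eq_sum_pCatalan (p r : ℕ) (hp : 0 < p) (hr : 0 < r) (n : ℕ) :
    (r : ℚ) / (n * p + r) * ((n * p + r).choose n) =
      ∑ f ∈ Finset.Nat.antidiagonalTuple r n, ∏ i, pCatalan p (f i) := by
  rw [sum_prod_pCatalan p hp r n]
  exact gRaney_eq p r hp hr n
end
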